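/- Let (φ, b) solve φ' = (1 + b²)/(2h²), b' = 2bφ on (0, R] with b(R) ≠ 0, where h : (0,∞) → (0,∞) is continuous with h(t) = t + O(t³) as t → 0⁺. Then φ(r) ≤ φ(R) + c₁ - 1/(2r) for some constant c₁ > 0 and all r ∈ (0, R]. -/

import Mathlib

open Real Filter Set

/-- For a solution of `φ' = (1 + b²)/(2h²)`, `b' = 2bφ` on
`(0, R]` with `b(R) ≠ 0` and `h(t) = t + O(t³)` near `0`, there is `c₁ > 0`
with `φ(r) ≤ φ(R) + c₁ - 1/(2r)` for all `r ∈ (0, R]`. -/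
theorem phi_upper_bound_P_alpha3
    (h φ b : ℝ → ℝ) (R : ℝ) (hR : 0 < R)
    (hhpos : ∀ t ∈ Ioi (0:ℝ), 0 < h t)
    (hhasymp : ∃ C t₁ : ℝ, 0 < C ∧ 0 < t₁ ∧
      ∀ t ∈ Ioc (0:ℝ) t₁, |h t - t| ≤ C * t ^ 3)
    (hODE : ∀ r ∈ Ioc (0:ℝ) R,
      HasDerivAt φ ((1 + b r ^ 2) / (2 * h r ^ 2)) r ∧
      HasDerivAt b (2 * b r * φ r) r)
    (hbR : b R ≠ 0) :
    ∃ c₁ : ℝ, 0 < c₁ ∧ ∀ r ∈ Ioc (0:ℝ) R, φ r ≤ φ R + c₁ - 1 / (2 * r) := by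
  obtain ⟨C, t₁, hC, ht₁, hasymp⟩ := hhasymp
  set D : ℝ := C + C ^ 2 * t₁ ^ 2 / 2 with hDdef
  have hDpos : 0 < D := by positivity
  set m : ℝ := min R t₁ with hmdef
  have hm0 : 0 < m := lt_min hR ht₁
  have hmR : m ≤ R := min_le_left _ _
  have hmt : m ≤ t₁ := min_le_right _ _
  clear_value D m
  -- monotonicity of φ on subintervals of (0, R]
  have hφmono : ∀ x y : ℝ, 0 < x → x ≤ y → y ≤ R → φ x ≤ φ y := by
    intro x y hx hxy hyR
    have hsub : Icc x y ⊆ Ioc (0:ℝ) R := fun t ht =>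
      ⟨lt_of_lt_of_le hx ht.1, le_trans ht.2 hyR⟩
    have hmono : MonotoneOn φ (Icc x y) := by
      apply monotoneOn_of_hasDerivWithinAt_nonneg (convex_Icc x y)
        (f' := fun t => (1 + b t ^ 2) / (2 * h t ^ 2))
      · intro t ht
        exact ((hODE t (hsub ht)).1).continuousAt.continuousWithinAt
      · intro t ht
        have ht' : t ∈ Icc x y := interior_subset ht
        exact ((hODE t (hsub ht')).1).hasDerivWithinAt
      · intro t ht
        have ht' : t ∈ Icc x y := interior_subset ht
        have hh : 0 < h t := hhpos t (hsub ht').1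
        positivity
    exact hmono ⟨le_refl x, hxy⟩ ⟨hxy, le_refl y⟩ hxy
  refine ⟨1 / (2 * m) + D * m, by positivity, ?_⟩
  intro r hr
  rcases le_or_gt r m with hrm | hrm
  · -- use the function g t = φ t + 1/(2t) + D t, monotone on [r, m]
    set g : ℝ → ℝ := fun t => φ t + (2 * t)⁻¹ + D * t with hgdef
    have hsub : Icc r m ⊆ Ioc (0:ℝ) R := fun t ht =>
      ⟨lt_of_lt_of_le hr.1 ht.1, le_trans ht.2 hmR⟩
    have hgderiv : ∀ t ∈ Icc r m,
        HasDerivAt g ((1 + b t ^ 2) / (2 * h t ^ 2) + (-2 / (2 * t) ^ 2) + D) t := by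
      intro t ht
      have h1 := (hODE t (hsub ht)).1
      have ht0 : (0:ℝ) < t := lt_of_lt_of_le hr.1 ht.1
      have h2 : HasDerivAt (fun s : ℝ => (2 * s)⁻¹) (-2 / (2 * t) ^ 2) t := by
        have := ((hasDerivAt_id t).const_mul (2:ℝ)).inv (by positivity)
        exact this.congr_deriv (by simp)
      have h3 : HasDerivAt (fun s : ℝ => D * s) D t := by
        simpa using (hasDerivAt_id t).const_mul D
      exact (h1.add h2).add h3
    have hgnonneg : ∀ t ∈ Icc r m,
        0 ≤ (1 + b t ^ 2) / (2 * h t ^ 2) + (-2 / (2 * t) ^ 2) + D := by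
      intro t ht
      have ht0 : (0:ℝ) < t := lt_of_lt_of_le hr.1 ht.1
      have htt₁ : t ≤ t₁ := le_trans ht.2 hmt
      have hh : 0 < h t := hhpos t ht0
      have habs := hasymp t ⟨ht0, htt₁⟩
      have hhle : h t ≤ t + C * t ^ 3 := by
        have := abs_le.mp habs
        linarith [this.2]
      have hb2 : 0 ≤ b t ^ 2 := sq_nonneg _
      have hpoly : (t + C * t ^ 3) ^ 2 * (1 - 2 * D * t ^ 2) ≤ t ^ 2 := by
        rw [hDdef]
        nlinarith [mul_nonneg (by positivity : (0:ℝ) ≤ C ^ 2 * t ^ 4)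
            (by nlinarith : (0:ℝ) ≤ t₁ ^ 2 - t ^ 2),
          mul_nonneg (by positivity : (0:ℝ) ≤ 2 * C * t ^ 4 + C ^ 2 * t ^ 6)
            (by positivity : (0:ℝ) ≤ 2 * C * t ^ 2 + C ^ 2 * t₁ ^ 2 * t ^ 2)]
      have hkey : (h t) ^ 2 * (1 - 2 * D * t ^ 2) ≤ t ^ 2 := by
        rcases le_or_gt (1 - 2 * D * t ^ 2) 0 with hc | hc
        · nlinarith [sq_nonneg (h t), sq_nonneg t]
        · have hsq : (h t) ^ 2 ≤ (t + C * t ^ 3) ^ 2 := by nlinarith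
          nlinarith [mul_le_mul_of_nonneg_right hsq hc.le]
      have hdiv : 1 / (2 * t ^ 2) - D ≤ 1 / (2 * h t ^ 2) := by
        rw [le_div_iff₀ (by positivity)]
        have heq : (1 / (2 * t ^ 2) - D) * (2 * h t ^ 2)
            = (h t ^ 2 * (1 - 2 * D * t ^ 2)) / t ^ 2 := by
          field_simp
        rw [heq, div_le_one (by positivity)]
        exact hkey
      have h1 : 1 / (2 * h t ^ 2) ≤ (1 + b t ^ 2) / (2 * h t ^ 2) := by
        gcongr
        nlinarith
      have h2 : -2 / (2 * t) ^ 2 = -(1 / (2 * t ^ 2)) := by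
        field_simp
      rw [h2]
      linarith
    have hmono : MonotoneOn g (Icc r m) := by
      apply monotoneOn_of_hasDerivWithinAt_nonneg (convex_Icc r m)
        (f' := fun t => (1 + b t ^ 2) / (2 * h t ^ 2) + (-2 / (2 * t) ^ 2) + D)
      · intro t ht
        exact ((hgderiv t ht)).continuousAt.continuousWithinAt
      · intro t ht
        exact (hgderiv t (interior_subset ht)).hasDerivWithinAt
      · intro t ht
        exact hgnonneg t (interior_subset ht)
    have hgrm : g r ≤ g m := hmono ⟨le_refl r, hrm⟩ ⟨hrm, le_refl m⟩ hrm
    have hφm : φ m ≤ φ R := hφmono m R hm0 hmR (le_refl R)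
    have e1 : (2 * r)⁻¹ = 1 / (2 * r) := (one_div _).symm
    have e2 : (2 * m)⁻¹ = 1 / (2 * m) := (one_div _).symm
    have hDr : 0 ≤ D * r := le_of_lt (mul_pos hDpos hr.1)
    rw [hgdef] at hgrm
    simp only at hgrm
    rw [e1, e2] at hgrm
    linarith [hgrm]
  · -- r > m : use monotonicity directly
    have h1 : φ r ≤ φ R := hφmono r R hr.1 hr.2 (le_refl R)
    have h2 : 1 / (2 * r) ≤ 1 / (2 * m) := by
      apply one_div_le_one_div_of_le (by positivity)
      linarith
    have h3 : 0 < D * m := by positivity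
    linarith
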